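/- Let X be a nonempty Polish space and let E be an equivalence relation on X which is σ-compact as a subset of X × X and all of whose equivalence classes are dense in X. Let (K_n) be a sequence of compact subsets of X such that [K_n]_E ≠ X for every n. Then ⋃_n [K_n]_E ≠ X. -/

import Mathlib

/-- Let `E` be a σ-compact equivalence relation with dense classes on a nonempty Polish space `X`.
If `(K n)` are compact sets whose saturations are each proper subsets of `X`, then the union of
the saturations is still a proper subset of `X`. -/
theorem stmt_4 {X : Type*} [TopologicalSpace X] [PolishSpace X] [Nonempty X]
    (E : X → X → Prop) (hE : Equivalence E)
    (hσ : IsSigmaCompact {p : X × X | E p.1 p.2})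
    (hdense : ∀ x : X, Dense {y : X | E x y})
    (K : ℕ → Set X) (hK : ∀ n, IsCompact (K n))
    (hsat : ∀ n, {x : X | ∃ k ∈ K n, E x k} ≠ Set.univ) :
    (⋃ n, {x : X | ∃ k ∈ K n, E x k}) ≠ Set.univ := by
  letI := TopologicalSpace.upgradeIsCompletelyMetrizable X
  obtain ⟨C, hCcomp, hCU⟩ := hσ
  set F : ℕ × ℕ → Set X :=
    fun p => Prod.fst '' (C p.2 ∩ Prod.snd ⁻¹' (K p.1)) with hF
  have hFcomp : ∀ p, IsCompact (F p) := by
    intro p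
    exact (((hCcomp p.2).inter_right
      ((hK p.1).isClosed.preimage continuous_snd)).image continuous_fst)
  have hFsub : ∀ p, F p ⊆ {x : X | ∃ k ∈ K p.1, E x k} := by
    rintro ⟨n, m⟩ x ⟨q, ⟨hqC, hqK⟩, rfl⟩
    have : q ∈ {p : X × X | E p.1 p.2} := hCU ▸ Set.mem_iUnion.2 ⟨m, hqC⟩
    exact ⟨q.2, hqK, this⟩
  intro hcontra
  have hUnion : (⋃ p, F p) = Set.univ := by
    apply Set.eq_univ_of_univ_subset
    rw [← hcontra]
    rintro x hx
    obtain ⟨n, k, hkK, hkE⟩ := Set.mem_iUnion.1 hx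
    have : (x, k) ∈ ⋃ m, C m := by rw [hCU]; exact hkE
    obtain ⟨m, hm⟩ := Set.mem_iUnion.1 this
    exact Set.mem_iUnion.2 ⟨(n, m), ⟨(x, k), ⟨hm, hkK⟩, rfl⟩⟩
  obtain ⟨⟨n, m⟩, x, hx⟩ := nonempty_interior_of_iUnion_of_closed
    (fun p => (hFcomp p).isClosed) hUnion
  -- pick y not in the saturation of K n
  obtain ⟨y, hy⟩ : ∃ y, y ∉ {x : X | ∃ k ∈ K n, E x k} := by
    by_contra h
    push_neg at h
    exact hsat n (Set.eq_univ_of_forall h)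
  -- the class of y is dense, so it meets the open set interior (F (n, m))
  obtain ⟨z, hz1, hz2⟩ := (hdense y).exists_mem_open isOpen_interior ⟨x, hx⟩
  have hzF : z ∈ F (n, m) := interior_subset hz2
  obtain ⟨k, hkK, hkE⟩ := hFsub (n, m) hzF
  exact hy ⟨k, hkK, hE.trans hz1 hkE⟩
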